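/- arXiv:1512.07411 — 3 statements merged into one kernel-verified Lean document; each statement's English description precedes it below -/
import Mathlib

section
/- A priori bounds from energy conservation: under the stated assumptions on κ, ρ, f and the classical solution y, for every t > 0 one has ∫_{ℝⁿ} κ(x) (∂ₜ y(x,t))² dx ≤ ∫_{ℝⁿ} ρ(x)⁻¹ |∇f(x)|² dx and ∫_{ℝⁿ} ρ(x)⁻¹ |∇ₓ y(x,t)|² dx ≤ ∫_{ℝⁿ} ρ(x)⁻¹ |∇f(x)|² dx. -/
open MeasureTheory Real Filter

/-- Divergence of a vector field on `EuclideanSpace ℝ (Fin n)`. -/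
noncomputable def ediv {n : ℕ} (v : EuclideanSpace ℝ (Fin n) → EuclideanSpace ℝ (Fin n))
    (x : EuclideanSpace ℝ (Fin n)) : ℝ :=
  ∑ i, fderiv ℝ v x (EuclideanSpace.single i (1 : ℝ)) i

/-- Riesz representation as a real-linear isometry equivalence. -/
noncomputable def riesz {m : ℕ} :
    (EuclideanSpace ℝ (Fin m) →L[ℝ] ℝ) ≃ₗᵢ[ℝ] EuclideanSpace ℝ (Fin m) where
  toFun A := (InnerProductSpace.toDual ℝ (EuclideanSpace ℝ (Fin m))).symm A
  invFun x := InnerProductSpace.toDual ℝ (EuclideanSpace ℝ (Fin m)) x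
  map_add' A B := by simp
  map_smul' c A := by
    simp [LinearIsometryEquiv.map_smulₛₗ, starRingEnd_apply, star_trivial]
  left_inv A := by simp
  right_inv x := by simp
  norm_map' A := by simp

lemma riesz_inner {m : ℕ} (A : EuclideanSpace ℝ (Fin m) →L[ℝ] ℝ)
    (w : EuclideanSpace ℝ (Fin m)) : (inner ℝ (riesz A) w : ℝ) = A w :=
  InnerProductSpace.toDual_symm_apply

lemma gradient_eq_riesz {m : ℕ} (g : EuclideanSpace ℝ (Fin m) → ℝ) (x : EuclideanSpace ℝ (Fin m)) :
    gradient g x = riesz (fderiv ℝ g x) := rfl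

section slices
variable {V W : Type} [NormedAddCommGroup V] [NormedSpace ℝ V]
  [NormedAddCommGroup W] [NormedSpace ℝ W]

lemma timeSlice {Y : V × ℝ → W} (hY : Differentiable ℝ Y) (x : V) (t : ℝ) :
    HasDerivAt (fun s => Y (x, s)) (fderiv ℝ Y (x, t) (0, 1)) t :=
  (hY _).hasFDerivAt.comp_hasDerivAt t ((hasDerivAt_const t x).prodMk (hasDerivAt_id t))

lemma spaceSlice {Y : V × ℝ → W} (hY : Differentiable ℝ Y) (x : V) (t : ℝ) :
    HasFDerivAt (fun w => Y (w, t))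
      ((fderiv ℝ Y (x, t)).comp (ContinuousLinearMap.inl ℝ V ℝ)) x :=
  (hY _).hasFDerivAt.comp x (hasFDerivAt_prodMk_left x t)

/-- Clairaut-type symmetry for a `C²` function. -/
lemma clairaut {Y : V → ℝ} (hY : ContDiff ℝ 2 Y) (p a b : V) :
    fderiv ℝ (fun q => fderiv ℝ Y q) p a b = fderiv ℝ (fun q => fderiv ℝ Y q) p b a :=
  second_derivative_symmetric (f := Y) (fun z => (hY.differentiable two_ne_zero z).hasFDerivAt)
    (((hY.fderiv_right (m := 1) le_rfl).differentiable one_ne_zero) p).hasFDerivAt a b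

end slices

lemma ediv_smul {n : ℕ} {φ : EuclideanSpace ℝ (Fin n) → ℝ}
    {v : EuclideanSpace ℝ (Fin n) → EuclideanSpace ℝ (Fin n)} {x : EuclideanSpace ℝ (Fin n)}
    (hφ : DifferentiableAt ℝ φ x) (hv : DifferentiableAt ℝ v x) :
    ediv (fun z => φ z • v z) x = fderiv ℝ φ x (v x) + φ x * ediv v x := by
  have hd : HasFDerivAt (fun z => φ z • v z)
      (φ x • fderiv ℝ v x + (fderiv ℝ φ x).smulRight (v x)) x :=
    hφ.hasFDerivAt.smul hv.hasFDerivAt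
  have hbasis : v x = ∑ i, v x i • EuclideanSpace.single i (1:ℝ) := by
    simpa [EuclideanSpace.basisFun_apply, EuclideanSpace.basisFun_repr] using
      (OrthonormalBasis.sum_repr (EuclideanSpace.basisFun (Fin n) ℝ) (v x)).symm
  have key : (fderiv ℝ φ x) (v x)
      = ∑ i, (fderiv ℝ φ x) (EuclideanSpace.single i (1:ℝ)) * v x i := by
    conv_lhs => rw [hbasis]
    rw [map_sum]
    refine Finset.sum_congr rfl fun i _ => ?_
    rw [_root_.map_smul, smul_eq_mul, mul_comm]
  rw [ediv, ediv]
  simp only [hd.fderiv]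
  simp only [ContinuousLinearMap.add_apply, ContinuousLinearMap.smul_apply,
    ContinuousLinearMap.smulRight_apply, PiLp.add_apply, PiLp.smul_apply, smul_eq_mul]
  rw [Finset.sum_add_distrib, key, ← Finset.mul_sum, add_comm]

noncomputable def rieszL {m : ℕ} :
    (EuclideanSpace ℝ (Fin m) →L[ℝ] ℝ) →L[ℝ] EuclideanSpace ℝ (Fin m) :=
  riesz.toLinearIsometry.toContinuousLinearMap

lemma rieszL_apply {m : ℕ} (A : EuclideanSpace ℝ (Fin m) →L[ℝ] ℝ) : rieszL A = riesz A := rfl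

noncomputable def spRestrict {m : ℕ} :
    ((EuclideanSpace ℝ (Fin m) × ℝ) →L[ℝ] ℝ) →L[ℝ] (EuclideanSpace ℝ (Fin m) →L[ℝ] ℝ) :=
  (ContinuousLinearMap.compL ℝ (EuclideanSpace ℝ (Fin m)) (EuclideanSpace ℝ (Fin m) × ℝ) ℝ).flip
    (ContinuousLinearMap.inl ℝ (EuclideanSpace ℝ (Fin m)) ℝ)

lemma spRestrict_apply {m : ℕ} (A : (EuclideanSpace ℝ (Fin m) × ℝ) →L[ℝ] ℝ) :
    spRestrict A = A.comp (ContinuousLinearMap.inl ℝ (EuclideanSpace ℝ (Fin m)) ℝ) := rfl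


lemma abs_coord_le_norm {m : ℕ} (x : EuclideanSpace ℝ (Fin m)) (i : Fin m) : |x i| ≤ ‖x‖ := by
  rw [EuclideanSpace.norm_eq, ← Real.sqrt_sq (abs_nonneg (x i))]
  apply Real.sqrt_le_sqrt
  rw [sq_abs]
  simp only [Real.norm_eq_abs, sq_abs]
  exact Finset.single_le_sum (f := fun j => x j ^ 2) (fun j _ => sq_nonneg _) (Finset.mem_univ i)

theorem integral_ediv_zero {m : ℕ}
    (v : EuclideanSpace ℝ (Fin (m+1)) → EuclideanSpace ℝ (Fin (m+1)))
    (hv : ContDiff ℝ 1 v) (hcs : HasCompactSupport v) : ∫ x, ediv v x = 0 := by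
  set e := EuclideanSpace.equiv (Fin (m+1)) ℝ with he
  obtain ⟨R, hR0, hR⟩ : ∃ R, 0 ≤ R ∧ tsupport v ⊆ Metric.closedBall 0 R := by
    obtain ⟨R, hR⟩ := hcs.isBounded.subset_closedBall 0
    exact ⟨max R 0, le_max_right _ _,
      hR.trans (Metric.closedBall_subset_closedBall (le_max_left _ _))⟩
  have hvanish : ∀ z : EuclideanSpace ℝ (Fin (m+1)), R < ‖z‖ → v z = 0 := by
    intro z hz
    by_contra h
    have := hR (subset_tsupport v h)
    simp only [Metric.mem_closedBall, dist_zero_right] at this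
    linarith
  have hdvanish : ∀ z : EuclideanSpace ℝ (Fin (m+1)), R < ‖z‖ → fderiv ℝ v z = 0 := by
    intro z hz
    by_contra h
    have := hR (support_fderiv_subset ℝ (f := v) h)
    simp only [Metric.mem_closedBall, dist_zero_right] at this
    linarith
  set a : Fin (m+1) → ℝ := fun _ => -(R+1) with ha
  set b : Fin (m+1) → ℝ := fun _ => (R+1) with hb
  have hle : a ≤ b := fun i => by simp only [ha, hb]; linarith
  set F : (Fin (m+1) → ℝ) → (Fin (m+1) → ℝ) := fun x => e (v (e.symm x)) with hF
  set F' : (Fin (m+1) → ℝ) → (Fin (m+1) → ℝ) →L[ℝ] (Fin (m+1) → ℝ) :=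
    fun x => (e.toContinuousLinearMap).comp
      ((fderiv ℝ v (e.symm x)).comp (e.symm.toContinuousLinearMap)) with hF'
  have hder : ∀ x, HasFDerivAt F (F' x) x := by
    intro x
    exact (e.toContinuousLinearMap.hasFDerivAt.comp _
      ((hv.differentiable one_ne_zero _).hasFDerivAt.comp x e.symm.hasFDerivAt))
  have hdiv : ∀ x, (∑ i, F' x (Pi.single i 1) i) = ediv v (e.symm x) := fun x => rfl
  have hcont : Continuous fun x => ∑ i, F' x (Pi.single i 1) i := by
    have h1 : Continuous (fderiv ℝ v) := (hv.fderiv_right (m := 0) le_rfl).continuous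
    apply continuous_finset_sum
    intro i _
    have heq : (fun x : Fin (m+1) → ℝ => F' x (Pi.single i 1) i)
        = fun x => (EuclideanSpace.proj i : EuclideanSpace ℝ (Fin (m+1)) →L[ℝ] ℝ)
            ((fderiv ℝ v (e.symm x)) (EuclideanSpace.single i 1)) := rfl
    rw [heq]
    exact (EuclideanSpace.proj i).continuous.comp
      ((h1.comp e.symm.continuous).clm_apply continuous_const)
  have key := MeasureTheory.integral_divergence_of_hasFDerivAt_off_countable a b hle F F'
    ∅ Set.countable_empty
    (by
      apply Continuous.continuousOn
      exact e.continuous.comp (hv.continuous.comp e.symm.continuous))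
    (fun x _ => hder x)
    ((hcont.continuousOn).integrableOn_compact isCompact_Icc)
  have hfaces : ∀ (i : Fin (m+1)) (c : ℝ), |c| = R + 1 →
      ∀ x : Fin m → ℝ, F (i.insertNth c x) i = 0 := by
    intro i c hc x
    have h2 : (e.symm (i.insertNth c x)) i = c := by
      have hpi : ∀ p : Fin (m+1) → ℝ, (e.symm p) i = p i := fun p => rfl
      rw [hpi, Fin.insertNth_apply_same]
    have hnorm : R < ‖e.symm (i.insertNth c x)‖ := by
      have h3 := abs_coord_le_norm (e.symm (i.insertNth c x)) i
      rw [h2, hc] at h3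
      linarith
    have hz : v (e.symm (i.insertNth c x)) = 0 := hvanish _ hnorm
    show (e (v (e.symm (i.insertNth c x)))) i = 0
    rw [hz]
    rfl
  rw [show (∑ i : Fin (m+1),
      ((∫ x in Set.Icc (a ∘ i.succAbove) (b ∘ i.succAbove), F (i.insertNth (b i) x) i) -
       ∫ x in Set.Icc (a ∘ i.succAbove) (b ∘ i.succAbove), F (i.insertNth (a i) x) i)) = 0 from ?_]
    at key
  · have hdivz : ∀ x : Fin (m+1) → ℝ, x ∉ Set.Icc a b → (∑ i, F' x (Pi.single i 1) i) = 0 := by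
      intro x hx
      have hex : ∃ i, R + 1 ≤ |x i| := by
        by_contra h
        push_neg at h
        refine hx ⟨fun i => ?_, fun i => ?_⟩
        · have := h i; rw [abs_lt] at this; show -(R+1) ≤ x i; linarith
        · have := h i; rw [abs_lt] at this; show x i ≤ R+1; linarith
      obtain ⟨i, hi⟩ := hex
      have hnorm : R < ‖e.symm x‖ := by
        have h3 := abs_coord_le_norm (e.symm x) i
        have h2 : (e.symm x) i = x i := rfl
        rw [h2] at h3
        linarith
      rw [hdiv, ediv, hdvanish _ hnorm]
      simp
    rw [MeasureTheory.setIntegral_eq_integral_of_forall_compl_eq_zero hdivz] at key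
    calc ∫ x, ediv v x
        = ∫ x : Fin (m+1) → ℝ, ediv v ((MeasurableEquiv.toLp 2 (Fin (m+1) → ℝ)).symm.symm x) := by
          rw [MeasurePreserving.integral_comp
            (MeasurePreserving.symm _ (EuclideanSpace.volume_preserving_symm_measurableEquiv_toLp (Fin (m+1))))
            (MeasurableEquiv.toLp 2 (Fin (m+1) → ℝ)).symm.symm.measurableEmbedding]
      _ = ∫ x : Fin (m+1) → ℝ, ∑ i, F' x (Pi.single i 1) i := by
          refine integral_congr_ae (Filter.Eventually.of_forall fun x => ?_)
          exact (hdiv x).symm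
      _ = 0 := key
  · apply Finset.sum_eq_zero
    intro i _
    have hbc : |b i| = R + 1 := by
      show |(R+1 : ℝ)| = R + 1
      rw [abs_of_nonneg (by linarith : (0:ℝ) ≤ R + 1)]
    have hac : |a i| = R + 1 := by
      show |(-(R+1) : ℝ)| = R + 1
      rw [abs_neg, abs_of_nonneg (by linarith : (0:ℝ) ≤ R + 1)]
    have h1 : (∫ x in Set.Icc (a ∘ i.succAbove) (b ∘ i.succAbove), F (i.insertNth (b i) x) i) = 0 := by
      have := fun x => hfaces i (b i) hbc x
      simp [this]
    have h2 : (∫ x in Set.Icc (a ∘ i.succAbove) (b ∘ i.succAbove), F (i.insertNth (a i) x) i) = 0 := by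
      have := fun x => hfaces i (a i) hac x
      simp [this]
    rw [h1, h2, sub_zero]

noncomputable def uD {m : ℕ} (y : EuclideanSpace ℝ (Fin m) → ℝ → ℝ) :
    EuclideanSpace ℝ (Fin m) × ℝ → ℝ :=
  fun p => fderiv ℝ (Function.uncurry y) p (0, 1)

noncomputable def uD2 {m : ℕ} (y : EuclideanSpace ℝ (Fin m) → ℝ → ℝ) :
    EuclideanSpace ℝ (Fin m) × ℝ → ℝ :=
  fun p => fderiv ℝ (uD y) p (0, 1)

noncomputable def gD {m : ℕ} (y : EuclideanSpace ℝ (Fin m) → ℝ → ℝ) :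
    EuclideanSpace ℝ (Fin m) × ℝ → EuclideanSpace ℝ (Fin m) :=
  fun p => rieszL (spRestrict (fderiv ℝ (Function.uncurry y) p))

noncomputable def gDU {m : ℕ} (y : EuclideanSpace ℝ (Fin m) → ℝ → ℝ) :
    EuclideanSpace ℝ (Fin m) × ℝ → EuclideanSpace ℝ (Fin m) :=
  fun p => rieszL (spRestrict (fderiv ℝ (uD y) p))

set_option maxHeartbeats 2000000 in
/-- A priori bounds from energy conservation: for every `t > 0`,
`∫ κ (∂ₜ y(t))² ≤ ∫ ρ⁻¹ |∇f|²` and `∫ ρ⁻¹ |∇y(t)|² ≤ ∫ ρ⁻¹ |∇f|²`. -/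
theorem apriori_energy_bounds
    {n : ℕ} (hn : 1 ≤ n)
    (κ ρ : EuclideanSpace ℝ (Fin n) → ℝ)
    (κmin κmax ρmin ρmax : ℝ)
    (hκreg : ContDiff ℝ 1 κ) (hρreg : ContDiff ℝ 1 ρ)
    (hκmin : 0 < κmin) (hρmin : 0 < ρmin)
    (hκb : ∀ x, κmin ≤ κ x ∧ κ x ≤ κmax)
    (hρb : ∀ x, ρmin ≤ ρ x ∧ ρ x ≤ ρmax)
    (f : EuclideanSpace ℝ (Fin n) → ℝ)
    (hfreg : ContDiff ℝ 2 f) (hfsupp : HasCompactSupport f)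
    (y : EuclideanSpace ℝ (Fin n) → ℝ → ℝ)
    (hyreg : ContDiff ℝ 2 (Function.uncurry y))
    (hwave : ∀ x, ∀ t : ℝ, 0 < t →
      κ x * deriv (deriv (y x)) t
        = ediv (fun z => (ρ z)⁻¹ • gradient (fun w => y w t) z) x)
    (hinit : ∀ x, y x 0 = f x)
    (hinit' : ∀ x, deriv (y x) 0 = 0)
    (hsupp : ∀ T : ℝ, 0 < T → ∃ C : Set (EuclideanSpace ℝ (Fin n)), IsCompact C ∧
        ∀ t ∈ Set.Icc (0 : ℝ) T, Function.support (fun x => y x t) ⊆ C)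
    :
    ∀ t : ℝ, 0 < t →
      (∫ x, κ x * (deriv (y x) t) ^ 2) ≤ (∫ x, (ρ x)⁻¹ * ‖gradient f x‖ ^ 2)
      ∧ (∫ x, (ρ x)⁻¹ * ‖gradient (fun w => y w t) x‖ ^ 2)
          ≤ (∫ x, (ρ x)⁻¹ * ‖gradient f x‖ ^ 2) := by
  obtain ⟨m, rfl⟩ : ∃ m, n = m + 1 := ⟨n - 1, (Nat.succ_pred_eq_of_pos hn).symm⟩
  intro t₁ ht₁
  -- basic regularity data
  have hY : ContDiff ℝ 2 (Function.uncurry y) := hyreg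
  have hYd : Differentiable ℝ (Function.uncurry y) := hY.differentiable two_ne_zero
  have hD1 : ContDiff ℝ 1 (fderiv ℝ (Function.uncurry y)) := hY.fderiv_right (m := 1) (by norm_num)
  have hDd : Differentiable ℝ (fderiv ℝ (Function.uncurry y)) := hD1.differentiable one_ne_zero
  have hU : ContDiff ℝ 1 (uD y) := hD1.clm_apply contDiff_const
  have hUd : Differentiable ℝ (uD y) := hU.differentiable one_ne_zero
  have hDU0 : Continuous (fderiv ℝ (uD y)) := (hU.fderiv_right (m := 0) (by norm_num)).continuous
  have hU2c : Continuous (uD2 y) := hDU0.clm_apply continuous_const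
  have hGc : Continuous (gD y) := (rieszL.continuous.comp spRestrict.continuous).comp hD1.continuous
  have hGUc : Continuous (gDU y) := (rieszL.continuous.comp spRestrict.continuous).comp hDU0
  have hG1 : ContDiff ℝ 1 (gD y) :=
    (rieszL.contDiff.comp spRestrict.contDiff).comp hD1
  -- identification lemmas
  have hu_eq : ∀ x t, deriv (y x) t = (uD y) (x, t) := fun x t => (timeSlice hYd x t).deriv
  have hu2_eq : ∀ x t, deriv (deriv (y x)) t = (uD2 y) (x, t) := by
    intro x t
    have h1 : deriv (y x) = fun s => (uD y) (x, s) := funext fun s => hu_eq x s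
    rw [h1]
    exact (timeSlice hUd x t).deriv
  have hG_eq : ∀ x t, gradient (fun w => y w t) x = (gD y) (x, t) := by
    intro x t
    rw [gradient_eq_riesz, ← rieszL_apply]
    congr 1
    rw [spRestrict_apply]
    exact (spaceSlice hYd x t).fderiv
  have hGU_fderiv : ∀ x t, fderiv ℝ (fun w => (uD y) (w, t)) x = spRestrict (fderiv ℝ (uD y) (x, t)) := by
    intro x t
    rw [spRestrict_apply]
    exact (spaceSlice hUd x t).fderiv
  have hGU_inner : ∀ x t (w : EuclideanSpace ℝ (Fin (m+1))),
      fderiv ℝ (fun z => (uD y) (z, t)) x w = (inner ℝ ((gDU y) (x, t)) w : ℝ) := by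
    intro x t w
    simp only [gDU]
    rw [rieszL_apply, riesz_inner]
    rw [hGU_fderiv]
  -- time derivative of (gD y) : Clairaut
  have hGt : ∀ x t, HasDerivAt (fun s => (gD y) (x, s)) ((gDU y) (x, t)) t := by
    intro x t
    have h1 : HasDerivAt (fun s => fderiv ℝ (Function.uncurry y) (x, s)) (fderiv ℝ (fderiv ℝ (Function.uncurry y)) (x, t) (0, 1)) t :=
      timeSlice hDd x t
    have h2 : HasDerivAt (fun s => (gD y) (x, s))
        ((rieszL.comp spRestrict) (fderiv ℝ (fderiv ℝ (Function.uncurry y)) (x, t) (0, 1))) t :=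
      (rieszL.comp spRestrict).hasFDerivAt.comp_hasDerivAt t h1
    have h3 : (rieszL.comp spRestrict) (fderiv ℝ (fderiv ℝ (Function.uncurry y)) (x, t) (0, 1)) = (gDU y) (x, t) := by
      rw [ContinuousLinearMap.comp_apply]
      simp only [gDU]
      congr 1
      apply ContinuousLinearMap.ext
      intro v
      rw [spRestrict_apply, spRestrict_apply]
      show fderiv ℝ (fderiv ℝ (Function.uncurry y)) (x, t) (0, 1) (v, 0) = fderiv ℝ (uD y) (x, t) (v, 0)
      have hUder : fderiv ℝ (uD y) (x, t)
          = (ContinuousLinearMap.apply ℝ ℝ ((0 : EuclideanSpace ℝ (Fin (m+1))), (1 : ℝ))).comp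
              (fderiv ℝ (fderiv ℝ (Function.uncurry y)) (x, t)) :=
        ((ContinuousLinearMap.apply ℝ ℝ ((0 : EuclideanSpace ℝ (Fin (m+1))), (1 : ℝ))).hasFDerivAt.comp (x, t)
          (hDd (x, t)).hasFDerivAt).fderiv
      rw [hUder]
      show fderiv ℝ (fderiv ℝ (Function.uncurry y)) (x, t) (0, 1) (v, 0)
          = fderiv ℝ (fderiv ℝ (Function.uncurry y)) (x, t) (v, 0) (0, 1)
      exact second_derivative_symmetric (fun z => (hYd z).hasFDerivAt)
        (hDd (x, t)).hasFDerivAt _ _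
    rw [← h3]
    exact h2
  -- integrands
  set Fn : ℝ → EuclideanSpace ℝ (Fin (m+1)) → ℝ := fun t x => κ x * (uD y) (x, t) ^ 2 + (ρ x)⁻¹ * ‖(gD y) (x, t)‖ ^ 2 with hFndef
  set Fd : ℝ → EuclideanSpace ℝ (Fin (m+1)) → ℝ := fun t x => κ x * (2 * (uD y) (x, t) * (uD2 y) (x, t))
      + (ρ x)⁻¹ * ((inner ℝ ((gD y) (x, t)) ((gDU y) (x, t)) : ℝ) + (inner ℝ ((gDU y) (x, t)) ((gD y) (x, t)) : ℝ))
    with hFddef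
  have hderiv_Fn : ∀ x t, HasDerivAt (fun s => Fn s x) (Fd t x) t := by
    intro x t
    have h1 : HasDerivAt (fun s => (uD y) (x, s)) ((uD2 y) (x, t)) t := timeSlice hUd x t
    have h2 : HasDerivAt (fun s => (uD y) (x, s) ^ 2) (2 * (uD y) (x, t) * (uD2 y) (x, t)) t := by
      simpa using h1.fun_pow 2
    have h3 := h2.const_mul (κ x)
    have h4 : HasDerivAt (fun s => (inner ℝ ((gD y) (x, s)) ((gD y) (x, s)) : ℝ))
        ((inner ℝ ((gD y) (x, t)) ((gDU y) (x, t)) : ℝ) + (inner ℝ ((gDU y) (x, t)) ((gD y) (x, t)) : ℝ)) t :=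
      (hGt x t).inner ℝ (hGt x t)
    have h5 := h4.const_mul ((ρ x)⁻¹)
    have h6 : (fun s => Fn s x) = fun s =>
        κ x * (uD y) (x, s) ^ 2 + (ρ x)⁻¹ * (inner ℝ ((gD y) (x, s)) ((gD y) (x, s)) : ℝ) := by
      funext s
      rw [hFndef]
      simp only []
      rw [real_inner_self_eq_norm_sq]
    rw [h6]
    exact h3.add h5
  have hρne : ∀ z : EuclideanSpace ℝ (Fin (m+1)), ρ z ≠ 0 := fun z => ne_of_gt (lt_of_lt_of_le hρmin (hρb z).1)
  have hρinv : ContDiff ℝ 1 fun z : EuclideanSpace ℝ (Fin (m+1)) => (ρ z)⁻¹ := hρreg.inv hρne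
  have hUslice : ∀ t, ContDiff ℝ 1 fun z : EuclideanSpace ℝ (Fin (m+1)) => (uD y) (z, t) := fun t =>
    hU.comp (contDiff_id.prodMk contDiff_const)
  have hGslice : ∀ t, ContDiff ℝ 1 fun z : EuclideanSpace ℝ (Fin (m+1)) => (gD y) (z, t) := fun t =>
    hG1.comp (contDiff_id.prodMk contDiff_const)
  -- wave equation in the new notation
  have hwU : ∀ x, ∀ t : ℝ, 0 < t →
      ediv (fun z => (ρ z)⁻¹ • (gD y) (z, t)) x = κ x * (uD2 y) (x, t) := by
    intro x t ht
    have h := hwave x t ht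
    rw [hu2_eq] at h
    have h2 : (fun z => (ρ z)⁻¹ • gradient (fun w => y w t) z)
        = fun z => (ρ z)⁻¹ • (gD y) (z, t) := funext fun z => by rw [hG_eq]
    rw [h2] at h
    exact h.symm
  -- pointwise identity Fd = ediv of a compactly supported field
  have hFd_ediv : ∀ t : ℝ, 0 < t → ∀ x,
      Fd t x = ediv (fun z => (2 * (uD y) (z, t)) • ((ρ z)⁻¹ • (gD y) (z, t))) x := by
    intro t ht x
    have hφd : DifferentiableAt ℝ (fun z : EuclideanSpace ℝ (Fin (m+1)) => 2 * (uD y) (z, t)) x :=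
      ((contDiff_const.mul (hUslice t)).differentiable one_ne_zero).differentiableAt
    have hvd : DifferentiableAt ℝ (fun z : EuclideanSpace ℝ (Fin (m+1)) => (ρ z)⁻¹ • (gD y) (z, t)) x :=
      ((hρinv.smul (hGslice t)).differentiable one_ne_zero).differentiableAt
    rw [ediv_smul hφd hvd]
    rw [hwU x t ht]
    have hfφ : fderiv ℝ (fun z : EuclideanSpace ℝ (Fin (m+1)) => 2 * (uD y) (z, t)) x
        = (2:ℝ) • fderiv ℝ (fun z : EuclideanSpace ℝ (Fin (m+1)) => (uD y) (z, t)) x :=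
      fderiv_const_mul (((hUslice t).differentiable one_ne_zero).differentiableAt) 2
    rw [hfφ]
    rw [ContinuousLinearMap.smul_apply, hGU_inner x t]
    rw [real_inner_smul_right]
    rw [hFddef]
    simp only []
    rw [real_inner_comm ((gD y) (x, t)) ((gDU y) (x, t))]
    simp only [smul_eq_mul]
    ring
  -- supports
  obtain ⟨C, hC, hCsub⟩ := hsupp (t₁ + 1) (by linarith)
  have hCsub' : ∀ s ∈ Set.Icc (0:ℝ) (t₁+1), ∀ z, z ∉ C → y z s = 0 := by
    intro s hs z hz
    by_contra h
    exact hz (hCsub s hs (by simpa using h))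
  have hUz : ∀ z, z ∉ C → ∀ s : ℝ, s ∈ Set.Ico (0:ℝ) (t₁+1) → (uD y) (z, s) = 0 := by
    intro z hz s hs
    rcases eq_or_lt_of_le hs.1 with h0 | h0
    · rw [← hu_eq, ← h0]
      exact hinit' z
    · rw [← hu_eq]
      have hev : y z =ᶠ[nhds s] fun _ => 0 := by
        filter_upwards [Ioo_mem_nhds h0 hs.2] with τ hτ
        exact hCsub' τ ⟨le_of_lt hτ.1, le_of_lt hτ.2⟩ z hz
      rw [hev.deriv_eq, deriv_const]
  have hGz : ∀ z, z ∉ C → ∀ s : ℝ, s ∈ Set.Icc (0:ℝ) (t₁+1) → (gD y) (z, s) = 0 := by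
    intro z hz s hs
    rw [← hG_eq]
    have hev : (fun w => y w s) =ᶠ[nhds z] fun _ => 0 := by
      filter_upwards [hC.isClosed.isOpen_compl.mem_nhds hz] with w hw
      exact hCsub' s hs w hw
    rw [gradient_eq_riesz, hev.fderiv_eq, fderiv_fun_const]
    simp
  -- joint continuity of integrands
  have hκc := hκreg.continuous
  have hρinvc : Continuous fun z : EuclideanSpace ℝ (Fin (m+1)) => (ρ z)⁻¹ := (hρinv.continuous)
  have hFnc : Continuous fun p : EuclideanSpace ℝ (Fin (m+1)) × ℝ => Fn p.2 p.1 := by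
    simp only [hFndef]
    apply Continuous.add
    · exact (hκc.comp continuous_fst).mul ((hU.continuous.comp ((continuous_fst.prodMk continuous_snd))).pow 2)
    · exact (hρinvc.comp continuous_fst).mul ((hGc.comp (continuous_fst.prodMk continuous_snd)).norm.pow 2)
  have hFdc : Continuous fun p : EuclideanSpace ℝ (Fin (m+1)) × ℝ => Fd p.2 p.1 := by
    simp only [hFddef]
    apply Continuous.add
    · exact (hκc.comp continuous_fst).mul
        ((continuous_const.mul (hU.continuous.comp (continuous_fst.prodMk continuous_snd))).mul
          (hU2c.comp (continuous_fst.prodMk continuous_snd)))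
    · exact (hρinvc.comp continuous_fst).mul
        (((hGc.comp (continuous_fst.prodMk continuous_snd)).inner (hGUc.comp (continuous_fst.prodMk continuous_snd))).add
          ((hGUc.comp (continuous_fst.prodMk continuous_snd)).inner (hGc.comp (continuous_fst.prodMk continuous_snd))))

  have hboundint : ∀ M : ℝ, MeasureTheory.Integrable (C.indicator fun _ => M) := by
    intro M
    rw [integrable_indicator_iff hC.measurableSet]
    exact integrableOn_const hC.measure_lt_top.ne
  -- integrability of Fn t for t in [0, t₁]
  have hFn_supp : ∀ t : ℝ, t ∈ Set.Icc (0:ℝ) t₁ → ∀ z, z ∉ C → Fn t z = 0 := by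
    intro t ht z hz
    have h1 : (uD y) (z, t) = 0 := hUz z hz t ⟨ht.1, by linarith [ht.2]⟩
    have h2 : (gD y) (z, t) = 0 := hGz z hz t ⟨ht.1, by linarith [ht.2]⟩
    simp only [hFndef, h1, h2]
    simp
  have hFn_int : ∀ t : ℝ, t ∈ Set.Icc (0:ℝ) t₁ → MeasureTheory.Integrable (Fn t) := by
    intro t ht
    apply Continuous.integrable_of_hasCompactSupport
    · exact hFnc.comp (continuous_id.prodMk continuous_const)
    · exact HasCompactSupport.intro hC (hFn_supp t ht)
  -- derivative of the energy is zero on (0, t₁)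
  have hEn_deriv : ∀ s : ℝ, s ∈ Set.Ioo (0:ℝ) t₁ → HasDerivAt (fun τ => ∫ x, Fn τ x) 0 s := by
    intro s hs
    have hε0 : 0 < min (s/2) (1/2) := lt_min (by linarith [hs.1]) one_half_pos
    have hball : ∀ τ ∈ Metric.ball s (min (s/2) (1/2)), 0 < τ ∧ τ < t₁ + 1 := by
      intro τ hτ
      rw [Metric.mem_ball, Real.dist_eq, abs_sub_lt_iff] at hτ
      have h1 : τ - s < min (s/2) (1/2) := hτ.1
      have h2 : s - τ < min (s/2) (1/2) := hτ.2
      have h3 : min (s/2) (1/2) ≤ s/2 := min_le_left _ _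
      have h4 : min (s/2) (1/2) ≤ 1/2 := min_le_right _ _
      constructor
      · linarith [hs.1]
      · linarith [hs.2]
    obtain ⟨M, hM⟩ := (hC.prod (isCompact_Icc (a := s - 1) (b := s + 1))).exists_bound_of_continuousOn
      hFdc.continuousOn
    have hbnd : ∀ᵐ (x : EuclideanSpace ℝ (Fin (m+1))) ∂(MeasureTheory.volume),
        ∀ τ ∈ Metric.ball s (min (s/2) (1/2)), ‖Fd τ x‖ ≤ C.indicator (fun _ => M) x := by
      refine Filter.Eventually.of_forall fun x τ hτ => ?_
      by_cases hx : x ∈ C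
      · rw [Set.indicator_of_mem hx]
        have hτ'' : τ ∈ Set.Icc (s-1) (s+1) := by
          rw [Metric.mem_ball, Real.dist_eq, abs_sub_lt_iff] at hτ
          have h4 : min (s/2) (1/2) ≤ 1/2 := min_le_right _ _
          constructor
          · linarith [hτ.2]
          · linarith [hτ.1]
        exact hM (x, τ) ⟨hx, hτ''⟩
      · rw [Set.indicator_of_notMem hx]
        have hτ' := hball τ hτ
        have h1 : (uD y) (x, τ) = 0 := hUz x hx τ ⟨le_of_lt hτ'.1, hτ'.2⟩
        have h2 : (gD y) (x, τ) = 0 := hGz x hx τ ⟨le_of_lt hτ'.1, le_of_lt hτ'.2⟩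
        simp only [hFddef, h1, h2]
        simp
    have key := hasDerivAt_integral_of_dominated_loc_of_deriv_le
      (μ := MeasureTheory.volume)
      (F := fun τ x => Fn τ x) (F' := fun τ x => Fd τ x) (x₀ := s)
      (bound := C.indicator fun _ => M) (Metric.ball_mem_nhds s hε0)
      (Filter.Eventually.of_forall fun τ =>
        ((hFnc.comp (continuous_id.prodMk continuous_const)).aestronglyMeasurable))
      (hFn_int s ⟨le_of_lt hs.1, le_of_lt hs.2⟩)
      ((hFdc.comp (continuous_id.prodMk continuous_const)).aestronglyMeasurable)
      hbnd
      (hboundint M)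
      (Filter.Eventually.of_forall fun x τ _ => hderiv_Fn x τ)
    have hzero : (∫ x, Fd s x) = 0 := by
      have hptw : ∀ x, Fd s x = ediv (fun z => (2 * (uD y) (z, s)) • ((ρ z)⁻¹ • (gD y) (z, s))) x :=
        hFd_ediv s hs.1
      rw [MeasureTheory.integral_congr_ae (Filter.Eventually.of_forall hptw)]
      apply integral_ediv_zero
      · exact ((contDiff_const.mul (hUslice s)).smul (hρinv.smul (hGslice s)))
      · apply HasCompactSupport.intro hC
        intro z hz
        have h1 : (uD y) (z, s) = 0 := hUz z hz s ⟨le_of_lt hs.1, by linarith [hs.2]⟩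
        simp [h1]
    rw [← hzero]
    exact key.2
  -- continuity of the energy on [0, t₁]
  have hEnc : ContinuousOn (fun τ => ∫ x, Fn τ x) (Set.Icc (0:ℝ) t₁) := by
    intro t₀ ht₀
    obtain ⟨M, hM⟩ := (hC.prod (isCompact_Icc (a := (0:ℝ)) (b := t₁))).exists_bound_of_continuousOn
      hFnc.continuousOn
    apply MeasureTheory.continuousWithinAt_of_dominated
      (bound := C.indicator fun _ => M)
    · exact Filter.Eventually.of_forall fun τ =>
        (hFnc.comp (continuous_id.prodMk continuous_const)).aestronglyMeasurable
    · filter_upwards [self_mem_nhdsWithin] with τ hτ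
      refine Filter.Eventually.of_forall fun x => ?_
      by_cases hx : x ∈ C
      · rw [Set.indicator_of_mem hx]
        exact hM (x, τ) ⟨hx, hτ⟩
      · rw [Set.indicator_of_notMem hx]
        rw [hFn_supp τ hτ x hx]
        simp
    · exact hboundint M
    · exact Filter.Eventually.of_forall fun x =>
        ((hFnc.comp (continuous_const.prodMk continuous_id)).continuousAt).continuousWithinAt
  -- energy conservation
  have hcons : (∫ x, Fn t₁ x) = ∫ x, Fn 0 x := by
    have h := MeasureTheory.integral_eq_of_hasDerivAt_off_countable
      (f := fun τ => ∫ x, Fn τ x) (f' := fun _ => (0:ℝ)) (a := 0) (b := t₁)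
      (Set.countable_singleton 0)
      (by rwa [Set.uIcc_of_le (le_of_lt ht₁)])
      (by
        intro τ hτ
        rw [min_eq_left (le_of_lt ht₁), max_eq_right (le_of_lt ht₁)] at hτ
        exact hEn_deriv τ hτ.1)
      (intervalIntegrable_const)
    simp only [intervalIntegral.integral_const, smul_eq_mul, mul_zero] at h
    linarith [h]
  -- value at time 0
  have hEn0 : (∫ x, Fn 0 x) = ∫ x, (ρ x)⁻¹ * ‖gradient f x‖ ^ 2 := by
    refine MeasureTheory.integral_congr_ae (Filter.Eventually.of_forall fun x => ?_)
    have h1 : (uD y) (x, 0) = 0 := by rw [← hu_eq]; exact hinit' x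
    have h2 : (gD y) (x, 0) = gradient f x := by
      rw [← hG_eq]
      congr 1
      funext w
      exact hinit w
    simp only [hFndef, h1, h2]
    ring
  -- final bookkeeping
  have hP_int : MeasureTheory.Integrable (fun x => κ x * (uD y) (x, t₁) ^ 2) := by
    apply Continuous.integrable_of_hasCompactSupport
    · exact hκc.mul (((hUslice t₁).continuous).pow 2)
    · apply HasCompactSupport.intro hC
      intro z hz
      rw [hUz z hz t₁ ⟨le_of_lt ht₁, by linarith⟩]
      ring
  have hQ_int : MeasureTheory.Integrable (fun x => (ρ x)⁻¹ * ‖(gD y) (x, t₁)‖ ^ 2) := by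
    apply Continuous.integrable_of_hasCompactSupport
    · exact hρinvc.mul ((((hGslice t₁).continuous).norm).pow 2)
    · apply HasCompactSupport.intro hC
      intro z hz
      rw [hGz z hz t₁ ⟨le_of_lt ht₁, by linarith⟩]
      simp
  have hρinv_nonneg : ∀ z : EuclideanSpace ℝ (Fin (m+1)), 0 ≤ (ρ z)⁻¹ := fun z =>
    inv_nonneg.2 (le_of_lt (lt_of_lt_of_le hρmin (hρb z).1))
  have hP_nonneg : 0 ≤ ∫ x, κ x * (uD y) (x, t₁) ^ 2 :=
    MeasureTheory.integral_nonneg fun x =>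
      mul_nonneg (le_of_lt (lt_of_lt_of_le hκmin (hκb x).1)) (sq_nonneg _)
  have hQ_nonneg : 0 ≤ ∫ x, (ρ x)⁻¹ * ‖(gD y) (x, t₁)‖ ^ 2 :=
    MeasureTheory.integral_nonneg fun x => mul_nonneg (hρinv_nonneg x) (sq_nonneg _)
  have hsum : (∫ x, κ x * (uD y) (x, t₁) ^ 2) + (∫ x, (ρ x)⁻¹ * ‖(gD y) (x, t₁)‖ ^ 2)
      = ∫ x, (ρ x)⁻¹ * ‖gradient f x‖ ^ 2 := by
    rw [← MeasureTheory.integral_add hP_int hQ_int]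
    rw [← hEn0, ← hcons]
  constructor
  · have hrw1 : (fun x : EuclideanSpace ℝ (Fin (m+1)) => κ x * (deriv (y x) t₁) ^ 2)
        = fun x => κ x * (uD y) (x, t₁) ^ 2 := funext fun x => by rw [hu_eq]
    rw [hrw1]
    linarith [hQ_nonneg, hsum]
  · have hrw2 : (fun x : EuclideanSpace ℝ (Fin (m+1)) => (ρ x)⁻¹ * ‖gradient (fun w => y w t₁) x‖ ^ 2)
        = fun x => (ρ x)⁻¹ * ‖(gD y) (x, t₁)‖ ^ 2 := funext fun x => by rw [hG_eq]
    rw [hrw2]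
    linarith [hP_nonneg, hsum]
end

section
/- Convergence of the Neumann-series reconstruction: let X and Y be real Banach spaces, L : X → Y and T : Y → X continuous linear maps, and K : X → X a continuous linear map with operator norm ‖K‖ < 1 such that T ∘ L = id_X − K. Let f ∈ X, set m := L f, and define f₀ := T m and f_k := f_{k−1} − T(L f_{k−1} − m) for k ≥ 1. Then the series Σ_{j=0}^{∞} K^j (T m) converges in X and f_k → f as k → ∞; in particular f = Σ_{j=0}^{∞} K^j (T m). -/
open Filter

/-- Convergence of the Neumann-series reconstruction: if `T ∘ L = id − K` with
`‖K‖ < 1`, `m = L f`, and `f₀ = T m`, `f_k = f_{k−1} − T (L f_{k−1} − m)`, then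
the series `Σ_j K^j (T m)` converges, `f_k → f`, and `f = Σ_j K^j (T m)`. -/
theorem neumann_series_convergence
    {X Y : Type*} [NormedAddCommGroup X] [NormedSpace ℝ X] [CompleteSpace X]
    [NormedAddCommGroup Y] [NormedSpace ℝ Y] [CompleteSpace Y]
    (L : X →L[ℝ] Y) (T : Y →L[ℝ] X) (K : X →L[ℝ] X)
    (hTL : T.comp L = ContinuousLinearMap.id ℝ X - K)
    (hK : ‖K‖ < 1)
    (f : X) (m : Y) (hm : m = L f)
    (seq : ℕ → X)
    (hseq0 : seq 0 = T m)
    (hseqrec : ∀ k : ℕ, seq (k + 1) = seq k - T (L (seq k) - m)) :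
    Summable (fun j : ℕ => (K ^ j) (T m))
      ∧ Tendsto seq atTop (nhds f)
      ∧ f = ∑' j : ℕ, (K ^ j) (T m) := by
  have hTLx : ∀ x : X, T (L x) = x - K x := by
    intro x
    have := congrArg (fun A : X →L[ℝ] X => A x) hTL
    simpa using this
  have hrec : ∀ k : ℕ, seq (k + 1) = K (seq k) + T m := by
    intro k
    rw [hseqrec k, map_sub, hTLx]
    abel
  have hf : f = K f + T m := by
    have := hTLx f
    rw [hm]
    rw [this] at *
    abel
  -- difference formula
  have hdiff : ∀ k : ℕ, f - seq k = (K ^ (k + 1)) f := by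
    intro k
    induction k with
    | zero =>
        rw [hseq0, pow_one]
        nth_rewrite 1 [hf]; abel
    | succ n ih =>
        rw [hrec n]
        have : f - (K (seq n) + T m) = K (f - seq n) := by
          nth_rewrite 1 [hf]
          rw [map_sub]; abel
        rw [this, ih, ← ContinuousLinearMap.mul_apply, ← pow_succ']
  -- seq tends to f
  have htend : Tendsto seq atTop (nhds f) := by
    have hnorm : ∀ k : ℕ, ‖f - seq k‖ ≤ ‖K‖ ^ (k + 1) * ‖f‖ := by
      intro k
      rw [hdiff k]
      calc ‖(K ^ (k + 1)) f‖ ≤ ‖K ^ (k + 1)‖ * ‖f‖ := (K ^ (k + 1)).le_opNorm f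
        _ ≤ ‖K‖ ^ (k + 1) * ‖f‖ := by
            gcongr; exact norm_pow_le' K (Nat.succ_pos k)
    have h0 : Tendsto (fun k : ℕ => ‖K‖ ^ (k + 1) * ‖f‖) atTop (nhds 0) := by
      have : Tendsto (fun k : ℕ => ‖K‖ ^ k) atTop (nhds 0) :=
        tendsto_pow_atTop_nhds_zero_of_norm_lt_one (by simpa using hK)
      have := (this.comp (tendsto_add_atTop_nat 1)).mul_const ‖f‖
      simpa using this
    have : Tendsto (fun k : ℕ => f - seq k) atTop (nhds 0) := by
      apply squeeze_zero_norm hnorm h0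
    have := this.const_sub f
    simpa using this
  -- summability
  have hsum : Summable (fun j : ℕ => (K ^ j) (T m)) := by
    apply Summable.of_norm
    refine Summable.of_nonneg_of_le (f := fun j : ℕ => ‖K‖ ^ j * ‖T m‖)
      ?_ ?_ ?_
    · exact fun j => norm_nonneg _
    · intro j
      calc ‖(K ^ j) (T m)‖ ≤ ‖K ^ j‖ * ‖T m‖ := (K ^ j).le_opNorm _
        _ ≤ ‖K‖ ^ j * ‖T m‖ := by
            gcongr
            cases j with
            | zero => simpa [ContinuousLinearMap.one_def] using
                ContinuousLinearMap.norm_id_le (𝕜 := ℝ) (E := X)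
            | succ n => exact norm_pow_le' K n.succ_pos
    · exact (summable_geometric_of_lt_one (norm_nonneg K) hK).mul_right _
  refine ⟨hsum, htend, ?_⟩
  -- partial sums
  have hpart : ∀ k : ℕ, seq k = ∑ j ∈ Finset.range (k + 1), (K ^ j) (T m) := by
    intro k
    induction k with
    | zero => simpa using hseq0
    | succ n ih =>
        rw [hrec n, ih, Finset.sum_range_succ' (fun j => (K ^ j) (T m)) (n + 1)]
        simp only [map_sum, pow_zero, ContinuousLinearMap.one_apply]
        congr 1
        apply Finset.sum_congr rfl
        intro j _
        rw [← ContinuousLinearMap.mul_apply, ← pow_succ']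
  have htsum : Tendsto (fun n : ℕ => ∑ j ∈ Finset.range n, (K ^ j) (T m)) atTop
      (nhds (∑' j : ℕ, (K ^ j) (T m))) := hsum.hasSum.tendsto_sum_nat
  have htsum' : Tendsto seq atTop (nhds (∑' j : ℕ, (K ^ j) (T m))) := by
    have := htsum.comp (tendsto_add_atTop_nat 1)
    simpa only [Function.comp_def, ← hpart] using this
  exact tendsto_nhds_unique htend htsum'
end

section
/- Convergence of the Landweber iteration to the minimum norm solution: let H and G be real Hilbert spaces, L : H → G a nonzero bounded linear operator with Hilbert-space adjoint L*, and let m ∈ G lie in the range of L. Let ω be a real number with 0 < ω < 2/‖L‖². Define f₀ := 0 and f_k := f_{k−1} − ω L*(L f_{k−1} − m) for k ≥ 1. Then (f_k) converges in norm to the minimum norm solution f†, i.e., to the unique element f† ∈ H satisfying L f† = m and f† ∈ (ker L)^⊥; equivalently, f† is the unique element of smallest norm among all solutions of L f = m. -/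
open Filter RealInnerProductSpace

private lemma landweber_step_est {H G : Type*}
    [NormedAddCommGroup H] [InnerProductSpace ℝ H] [CompleteSpace H]
    [NormedAddCommGroup G] [InnerProductSpace ℝ G] [CompleteSpace G]
    (A : H →L[ℝ] G) (ω : ℝ) (x : H) :
    ‖x - ω • (ContinuousLinearMap.adjoint A) (A x)‖ ^ 2
      ≤ ‖x‖ ^ 2 - ω * (2 - ω * ‖A‖ ^ 2) * ‖A x‖ ^ 2 := by
  have h1 : ⟪x, ω • (ContinuousLinearMap.adjoint A) (A x)⟫ = ω * ‖A x‖ ^ 2 := by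
    rw [real_inner_smul_right, ContinuousLinearMap.adjoint_inner_right,
      real_inner_self_eq_norm_sq]
  have h2 : ‖(ContinuousLinearMap.adjoint A) (A x)‖ ≤ ‖A‖ * ‖A x‖ := by
    calc ‖(ContinuousLinearMap.adjoint A) (A x)‖
        ≤ ‖ContinuousLinearMap.adjoint A‖ * ‖A x‖ := (ContinuousLinearMap.adjoint A).le_opNorm _
      _ = ‖A‖ * ‖A x‖ := by rw [ContinuousLinearMap.adjoint.norm_map]
  have h3 : ‖x - ω • (ContinuousLinearMap.adjoint A) (A x)‖ ^ 2
      = ‖x‖ ^ 2 - 2 * (ω * ‖A x‖ ^ 2) + ‖ω • (ContinuousLinearMap.adjoint A) (A x)‖ ^ 2 := by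
    rw [← h1, norm_sub_sq_real]
  have h4 : ‖ω • (ContinuousLinearMap.adjoint A) (A x)‖ ^ 2
      ≤ ω ^ 2 * (‖A‖ * ‖A x‖) ^ 2 := by
    rw [norm_smul]
    have hn : (0:ℝ) ≤ ‖(ContinuousLinearMap.adjoint A) (A x)‖ := norm_nonneg _
    have h5 : |ω| * ‖(ContinuousLinearMap.adjoint A) (A x)‖ ≤ |ω| * (‖A‖ * ‖A x‖) := by
      exact mul_le_mul_of_nonneg_left h2 (abs_nonneg ω)
    calc (|ω| * ‖(ContinuousLinearMap.adjoint A) (A x)‖) ^ 2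
        ≤ (|ω| * (‖A‖ * ‖A x‖)) ^ 2 := by
          apply pow_le_pow_left₀ (by positivity) h5
      _ = ω ^ 2 * (‖A‖ * ‖A x‖) ^ 2 := by rw [mul_pow, sq_abs]
  nlinarith [h3, h4]

set_option maxHeartbeats 1000000 in
/-- Convergence of the Landweber iteration to the minimum norm solution:
for a nonzero bounded operator `L` between real Hilbert spaces, `m` in the
range of `L`, and relaxation parameter `0 < ω < 2/‖L‖²`, the iterates
`f₀ = 0`, `f_{k+1} = f_k − ω L* (L f_k − m)` converge in norm to the unique
`f† ∈ (ker L)ᗮ` with `L f† = m`, which is also the unique minimum norm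
solution of `L f = m`. -/
theorem landweber_convergence_minimum_norm
    {H G : Type*}
    [NormedAddCommGroup H] [InnerProductSpace ℝ H] [CompleteSpace H]
    [NormedAddCommGroup G] [InnerProductSpace ℝ G] [CompleteSpace G]
    (L : H →L[ℝ] G) (hL : L ≠ 0)
    (m : G) (hm : ∃ u : H, L u = m)
    (ω : ℝ) (hω₁ : 0 < ω) (hω₂ : ω < 2 / ‖L‖ ^ 2)
    (f : ℕ → H) (hf0 : f 0 = 0)
    (hfrec : ∀ k : ℕ, f (k + 1) = f k - ω • (ContinuousLinearMap.adjoint L) (L (f k) - m)) :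
    ∃ fdag : H,
      L fdag = m ∧ fdag ∈ (LinearMap.ker (L : H →ₗ[ℝ] G))ᗮ
      ∧ (∀ g : H, L g = m → g ∈ (LinearMap.ker (L : H →ₗ[ℝ] G))ᗮ → g = fdag)
      ∧ (∀ g : H, L g = m → ‖fdag‖ ≤ ‖g‖)
      ∧ (∀ g : H, L g = m → ‖g‖ ≤ ‖fdag‖ → g = fdag)
      ∧ Tendsto f atTop (nhds fdag) := by
  obtain ⟨u, hu⟩ := hm
  set K : Submodule ℝ H := LinearMap.ker (L : H →ₗ[ℝ] G) with hK
  haveI : CompleteSpace K := (ContinuousLinearMap.isClosed_ker L).completeSpace_coe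
  set fdag : H := u - (Submodule.orthogonalProjectionOnto K u : H) with hfdag
  have hmemK : ((Submodule.orthogonalProjectionOnto K u : H)) ∈ K := (Submodule.orthogonalProjectionOnto K u).2
  have hLfdag : L fdag = m := by
    have : L ((Submodule.orthogonalProjectionOnto K u : H)) = 0 := hmemK
    simp only [hfdag, map_sub, this, hu, sub_zero]
  have hperp : fdag ∈ Kᗮ := K.sub_starProjection_mem_orthogonal u
  -- uniqueness in Kᗮ
  have huniq : ∀ g : H, L g = m → g ∈ Kᗮ → g = fdag := by
    intro g hg hgperp
    have hker : g - fdag ∈ K := by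
      simp only [hK, LinearMap.mem_ker, ContinuousLinearMap.coe_coe, map_sub, hg, hLfdag, sub_self]
    have hperp' : g - fdag ∈ Kᗮ := Submodule.sub_mem _ hgperp hperp
    have h0 : ⟪g - fdag, g - fdag⟫ = 0 := (Submodule.mem_orthogonal _ _).1 hperp' _ hker
    exact sub_eq_zero.mp (inner_self_eq_zero.mp h0)
  -- pythagoras : for any solution g, ‖g‖² = ‖fdag‖² + ‖g - fdag‖²
  have hpyth : ∀ g : H, L g = m → ‖g‖ ^ 2 = ‖fdag‖ ^ 2 + ‖g - fdag‖ ^ 2 := by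
    intro g hg
    have hker : g - fdag ∈ K := by
      simp only [hK, LinearMap.mem_ker, ContinuousLinearMap.coe_coe, map_sub, hg, hLfdag, sub_self]
    have h0 : ⟪fdag, g - fdag⟫ = 0 :=
      real_inner_comm fdag (g - fdag) ▸ ((Submodule.mem_orthogonal _ _).1 hperp _ hker)
    have hsum : fdag + (g - fdag) = g := by abel
    have h2 := norm_add_sq_real fdag (g - fdag)
    rw [hsum, h0] at h2
    linarith
  have hmin : ∀ g : H, L g = m → ‖fdag‖ ≤ ‖g‖ := by
    intro g hg
    have := hpyth g hg
    nlinarith [norm_nonneg g, norm_nonneg fdag, sq_nonneg ‖g - fdag‖]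
  have hminuniq : ∀ g : H, L g = m → ‖g‖ ≤ ‖fdag‖ → g = fdag := by
    intro g hg hle
    have hp := hpyth g hg
    have : ‖g - fdag‖ ^ 2 ≤ 0 := by nlinarith [norm_nonneg g, norm_nonneg fdag]
    have : ‖g - fdag‖ = 0 := by nlinarith [norm_nonneg (g - fdag)]
    exact sub_eq_zero.mp (norm_eq_zero.mp this)
  refine ⟨fdag, hLfdag, hperp, huniq, hmin, hminuniq, ?_⟩
  -- convergence
  have hLpos : 0 < ‖L‖ := norm_pos_iff.mpr hL
  set c : ℝ := ω * (2 - ω * ‖L‖ ^ 2) with hc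
  have hcpos : 0 < c := by
    have h2 : ω * ‖L‖ ^ 2 < 2 := by
      have := (lt_div_iff₀ (by positivity : (0:ℝ) < ‖L‖ ^ 2)).mp hω₂
      linarith
    exact mul_pos hω₁ (by linarith)
  set S : H →L[ℝ] H := ContinuousLinearMap.id ℝ H
      - ω • ((ContinuousLinearMap.adjoint L).comp L) with hSdef
  set S' : G →L[ℝ] G := ContinuousLinearMap.id ℝ G
      - ω • (L.comp (ContinuousLinearMap.adjoint L)) with hS'def
  have hSapp : ∀ x : H, S x = x - ω • (ContinuousLinearMap.adjoint L) (L x) := fun x => rfl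
  have hS'app : ∀ w : G, S' w = w - ω • L ((ContinuousLinearMap.adjoint L) w) := fun w => rfl
  have hest : ∀ x : H, ‖S x‖ ^ 2 ≤ ‖x‖ ^ 2 - c * ‖L x‖ ^ 2 := by
    intro x
    have h := landweber_step_est L ω x
    rw [hSapp x, hc]
    exact h
  have hScontr : ∀ x : H, ‖S x‖ ≤ ‖x‖ := by
    intro x
    have h := hest x
    have h2 : ‖S x‖ ^ 2 ≤ ‖x‖ ^ 2 := by nlinarith [sq_nonneg ‖L x‖]
    nlinarith [norm_nonneg (S x), norm_nonneg x]
  have hest' : ∀ w : G, ‖S' w‖ ^ 2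
      ≤ ‖w‖ ^ 2 - c * ‖(ContinuousLinearMap.adjoint L) w‖ ^ 2 := by
    intro w
    have h := landweber_step_est (ContinuousLinearMap.adjoint L) ω w
    rw [ContinuousLinearMap.adjoint_adjoint, ContinuousLinearMap.adjoint.norm_map] at h
    rw [hS'app w, hc]
    exact h
  -- error sequence is iterates of S
  have he : ∀ k : ℕ, f k - fdag = S^[k] (-fdag) := by
    intro k
    induction k with
    | zero => simp [hf0]
    | succ k ih =>
      rw [Function.iterate_succ_apply', ← ih, hfrec k, hSapp]
      have hLm : L (f k) - m = L (f k - fdag) := by rw [map_sub, hLfdag]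
      rw [hLm]
      abel
  have hiter : ∀ (x : H) (k : ℕ), ‖S^[k] x‖ ≤ ‖x‖ := by
    intro x k
    induction k with
    | zero => simp
    | succ k ih =>
      rw [Function.iterate_succ_apply']
      exact (hScontr _).trans ih
  have hadditer : ∀ (k : ℕ) (a b : H), S^[k] (a + b) = S^[k] a + S^[k] b := by
    intro k
    induction k with
    | zero => intro a b; simp
    | succ k ih =>
      intro a b
      rw [Function.iterate_succ_apply', Function.iterate_succ_apply',
        Function.iterate_succ_apply', ih, map_add]
  have hcomm : ∀ (w : G) (k : ℕ),
      S^[k] ((ContinuousLinearMap.adjoint L) w)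
        = (ContinuousLinearMap.adjoint L) (S'^[k] w) := by
    intro w k
    induction k with
    | zero => simp
    | succ k ih =>
      rw [Function.iterate_succ_apply', Function.iterate_succ_apply', ih,
        hSapp, hS'app, map_sub, map_smul]
  -- -fdag lies in the closure of the range of the adjoint
  set R : Submodule ℝ H := LinearMap.range (ContinuousLinearMap.adjoint L : G →ₗ[ℝ] H) with hR
  have hRK : Rᗮ ≤ K := by
    intro x hx
    have h0 : ⟪(ContinuousLinearMap.adjoint L) (L x), x⟫ = 0 :=
      (Submodule.mem_orthogonal _ _).1 hx _ ⟨L x, rfl⟩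
    rw [ContinuousLinearMap.adjoint_inner_left] at h0
    exact inner_self_eq_zero.mp h0
  have hsubclos : Kᗮ ≤ R.topologicalClosure := by
    rw [← Submodule.orthogonal_orthogonal_eq_closure]
    exact Submodule.orthogonal_le hRK
  have hmemclos : -fdag ∈ closure (R : Set H) := by
    exact hsubclos (Submodule.neg_mem _ hperp)
  -- main convergence
  have key : Tendsto (fun k => f k - fdag) atTop (nhds 0) := by
    rw [Metric.tendsto_atTop]
    intro ε hε
    obtain ⟨y, hyR, hy⟩ := SeminormedAddCommGroup.mem_closure_iff.mp hmemclos (ε / 2)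
      (half_pos hε)
    obtain ⟨w, hw⟩ := hyR
    -- the sequence ‖L† (S'^[k] w)‖² is summable after scaling by c
    set a : ℕ → ℝ := fun k => ‖(ContinuousLinearMap.adjoint L) (S'^[k] w)‖ ^ 2 with ha
    have htel : ∀ n : ℕ, ∑ i ∈ Finset.range n, c * a i ≤ ‖w‖ ^ 2 - ‖S'^[n] w‖ ^ 2 := by
      intro n
      induction n with
      | zero => simp
      | succ n ih =>
        rw [Finset.sum_range_succ]
        have hstep := hest' (S'^[n] w)
        rw [← Function.iterate_succ_apply' S'] at hstep
        have : c * a n = c * ‖(ContinuousLinearMap.adjoint L) (S'^[n] w)‖ ^ 2 := rfl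
        rw [this]
        linarith
    have hbdd : ∀ n : ℕ, ∑ i ∈ Finset.range n, c * a i ≤ ‖w‖ ^ 2 := by
      intro n
      have := htel n
      linarith [sq_nonneg ‖(⇑S')^[n] w‖]
    have hsummable : Summable (fun k => c * a k) :=
      summable_of_sum_range_le (fun k => mul_nonneg hcpos.le (sq_nonneg _)) hbdd
    have htend0 : Tendsto (fun k => c * a k) atTop (nhds 0) :=
      hsummable.tendsto_atTop_zero
    have hsmall : ∀ᶠ k in atTop, c * a k < c * (ε / 2) ^ 2 := by
      have hpos : (0:ℝ) < c * (ε / 2) ^ 2 := by positivity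
      exact htend0.eventually (eventually_lt_nhds hpos)
    obtain ⟨N, hN⟩ := eventually_atTop.mp hsmall
    refine ⟨N, fun k hk => ?_⟩
    have hak : a k < (ε / 2) ^ 2 := lt_of_mul_lt_mul_left (hN k hk) (le_of_lt hcpos)
    have hnorm2 : ‖(ContinuousLinearMap.adjoint L) (S'^[k] w)‖ < ε / 2 := by
      have hsq : ‖(ContinuousLinearMap.adjoint L) ((⇑S')^[k] w)‖ ^ 2 < (ε / 2) ^ 2 := hak
      nlinarith [norm_nonneg ((ContinuousLinearMap.adjoint L) ((⇑S')^[k] w)), half_pos hε]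
    rw [dist_zero_right, he k]
    have hdecomp : (-fdag : H) = (-fdag - y) + y := by abel
    calc ‖S^[k] (-fdag)‖ = ‖S^[k] ((-fdag - y) + y)‖ := by rw [← hdecomp]
      _ = ‖S^[k] (-fdag - y) + S^[k] y‖ := by rw [hadditer]
      _ ≤ ‖S^[k] (-fdag - y)‖ + ‖S^[k] y‖ := norm_add_le _ _
      _ ≤ ‖-fdag - y‖ + ‖S^[k] y‖ := by gcongr; exact hiter _ k
      _ = ‖-fdag - y‖ + ‖(ContinuousLinearMap.adjoint L) (S'^[k] w)‖ := by
          rw [← hw, ContinuousLinearMap.coe_coe, hcomm]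
      _ < ε / 2 + ε / 2 := by exact add_lt_add hy hnorm2
      _ = ε := by ring
  exact tendsto_sub_nhds_zero_iff.mp key
end
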